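/- For k, l > 3, γ_gr(C_k ∘ C_l) = (k/2)(l−2) if k is even, and ⌊k/2⌋(l−2) + 1 if k is odd. -/

import Mathlib

open SimpleGraph

/-- The closed neighborhood of a vertex. -/
def closedNbhd {V : Type*} (G : SimpleGraph V) (v : V) : Set V :=
  insert v (G.neighborSet v)

/-- A legal (closed neighborhood) sequence: distinct vertices, each dominating
a vertex not dominated by its predecessors. -/
def IsLegalSeq {V : Type*} (G : SimpleGraph V) (l : List V) : Prop :=
  l.Nodup ∧ ∀ i : Fin l.length, ∃ u, u ∈ closedNbhd G (l.get i) ∧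
    ∀ j : Fin l.length, (j : ℕ) < (i : ℕ) → u ∉ closedNbhd G (l.get j)

/-- A dominating sequence: a legal sequence whose vertex set dominates the graph. -/
def IsDomSeq {V : Type*} (G : SimpleGraph V) (l : List V) : Prop :=
  IsLegalSeq G l ∧ ∀ v : V, ∃ u ∈ l, v ∈ closedNbhd G u

/-- The Grundy domination number: maximum length of a dominating sequence. -/
noncomputable def grundyDomNum {V : Type*} (G : SimpleGraph V) : ℕ :=
  sSup {n | ∃ l : List V, IsDomSeq G l ∧ l.length = n}

/-- A legal open neighborhood sequence. -/
def IsLegalOpenSeq {V : Type*} (G : SimpleGraph V) (l : List V) : Prop :=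
  l.Nodup ∧ ∀ i : Fin l.length, ∃ u, u ∈ G.neighborSet (l.get i) ∧
    ∀ j : Fin l.length, (j : ℕ) < (i : ℕ) → u ∉ G.neighborSet (l.get j)

/-- A total dominating sequence. -/
def IsTotalDomSeq {V : Type*} (G : SimpleGraph V) (l : List V) : Prop :=
  IsLegalOpenSeq G l ∧ ∀ v : V, ∃ u ∈ l, v ∈ G.neighborSet u

/-- The Grundy total domination number. -/
noncomputable def grundyTotalDomNum {V : Type*} (G : SimpleGraph V) : ℕ :=
  sSup {n | ∃ l : List V, IsTotalDomSeq G l ∧ l.length = n}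

/-- The edge clique cover number: minimum size of a family of cliques covering all edges. -/
noncomputable def edgeCliqueCoverNum {V : Type*} (G : SimpleGraph V) : ℕ :=
  sInf {n | ∃ C : Finset (Set V), C.card = n ∧ (∀ Q ∈ C, G.IsClique Q) ∧
    ∀ u v : V, G.Adj u v → ∃ Q ∈ C, u ∈ Q ∧ v ∈ Q}

/-- The independence number. -/
noncomputable def indepNum {V : Type*} (G : SimpleGraph V) : ℕ :=
  sSup {n | ∃ s : Finset V, (s : Set V).Pairwise (fun u v => ¬ G.Adj u v) ∧ s.card = n}

/-- The lexicographic product of simple graphs. -/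
def lexProd {V W : Type*} (G : SimpleGraph V) (H : SimpleGraph W) : SimpleGraph (V × W) where
  Adj x y := G.Adj x.1 y.1 ∨ (x.1 = y.1 ∧ H.Adj x.2 y.2)
  symm := ⟨by
    rintro x y (h | ⟨e, h⟩)
    · exact Or.inl h.symm
    · exact Or.inr ⟨e.symm, h.symm⟩⟩
  loopless := ⟨by
    rintro x (h | ⟨_, h⟩)
    · exact G.irrefl h
    · exact H.irrefl h⟩

/-- The strong product of simple graphs. -/
def strongProd {V W : Type*} (G : SimpleGraph V) (H : SimpleGraph W) : SimpleGraph (V × W) where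
  Adj x y := x ≠ y ∧ (x.1 = y.1 ∨ G.Adj x.1 y.1) ∧ (x.2 = y.2 ∨ H.Adj x.2 y.2)
  symm := ⟨by
    rintro x y ⟨hne, h1, h2⟩
    refine ⟨hne.symm, ?_, ?_⟩
    · rcases h1 with h | h
      · exact Or.inl h.symm
      · exact Or.inr h.symm
    · rcases h2 with h | h
      · exact Or.inl h.symm
      · exact Or.inr h.symm⟩
  loopless := ⟨fun x h => h.1 rfl⟩

/-- The direct (tensor) product of simple graphs. -/
def directProd {V W : Type*} (G : SimpleGraph V) (H : SimpleGraph W) : SimpleGraph (V × W) where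
  Adj x y := G.Adj x.1 y.1 ∧ H.Adj x.2 y.2
  symm := ⟨fun _ _ h => ⟨h.1.symm, h.2.symm⟩⟩
  loopless := ⟨fun x h => G.irrefl h.1⟩

/-- The boundary of a set of vertices. -/
def boundarySet {V : Type*} (G : SimpleGraph V) (S : Set V) : Set V :=
  {u | u ∉ S ∧ ∃ s ∈ S, G.Adj u s}

/-- `aVal G l` is the number of entries of `l` not adjacent to any earlier entry. -/
def aVal {V : Type*} (G : SimpleGraph V) [DecidableRel G.Adj] (l : List V) : ℕ :=
  (Finset.univ.filter (fun i : Fin l.length =>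
    ∀ j : Fin l.length, (j : ℕ) < (i : ℕ) → ¬ G.Adj (l.get j) (l.get i))).card


namespace Stmt12

open scoped Fin.NatCast Fin.CommRing

open Finset

variable {k l : ℕ}

/-- The product graph under consideration. -/
abbrev GG (k l : ℕ) : SimpleGraph (Fin k × Fin l) := lexProd (cycleGraph k) (cycleGraph l)


section Infra

variable [NeZero k] [NeZero l]

lemma val_one_eq (hk : 3 < k) : ((1 : Fin k)).val = 1 := by
  rw [Fin.val_one', Nat.mod_eq_of_lt (by omega)]

lemma fin_one_ne_zero (hk : 3 < k) : (1 : Fin k) ≠ 0 := by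
  intro h
  have := congrArg Fin.val h
  rw [val_one_eq hk] at this
  simp at this

lemma fin_two_ne_zero (hk : 3 < k) : (1 + 1 : Fin k) ≠ 0 := by
  intro h
  have := congrArg Fin.val h
  rw [Fin.val_add, val_one_eq hk] at this
  simp [Nat.mod_eq_of_lt (show 1 + 1 < k by omega)] at this

lemma cycle_adj (hk : 3 < k) {a b : Fin k} :
    (cycleGraph k).Adj a b ↔ b = a + 1 ∨ b = a - 1 := by
  rw [cycleGraph_adj']
  have hv1 : ((1 : Fin k)).val = 1 := val_one_eq hk
  constructor
  · rintro (h | h)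
    · right
      have h2 : a - b = 1 := Fin.val_injective (by rw [h, hv1])
      rw [← h2]; ring
    · left
      have h2 : b - a = 1 := Fin.val_injective (by rw [h, hv1])
      rw [← h2]; ring
  · rintro (rfl | rfl)
    · right; rw [show a + 1 - a = 1 by ring, hv1]
    · left; rw [show a - (a - 1) = 1 by ring, hv1]

/-- Characterization of closed neighborhoods in the product. -/
lemma mem_closedNbhd (hk : 3 < k) (hl : 3 < l) (v w : Fin k × Fin l) :
    w ∈ closedNbhd (GG k l) v ↔
      (w.1 = v.1 + 1 ∨ w.1 = v.1 - 1) ∨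
        (w.1 = v.1 ∧ (w.2 = v.2 ∨ w.2 = v.2 + 1 ∨ w.2 = v.2 - 1)) := by
  unfold closedNbhd
  simp only [Set.mem_insert_iff, mem_neighborSet]
  show w = v ∨ ((cycleGraph k).Adj v.1 w.1 ∨ v.1 = w.1 ∧ (cycleGraph l).Adj v.2 w.2) ↔ _
  rw [cycle_adj hk, cycle_adj hl]
  constructor
  · rintro (rfl | (h | ⟨h1, h2⟩))
    · exact Or.inr ⟨rfl, Or.inl rfl⟩
    · exact Or.inl h
    · exact Or.inr ⟨h1.symm, Or.inr h2⟩
  · rintro (h | ⟨h1, (h2 | h2)⟩)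
    · exact Or.inr (Or.inl h)
    · left; exact Prod.ext h1 h2
    · exact Or.inr (Or.inr ⟨h1.symm, h2⟩)

lemma add_one_ne (hk : 3 < k) (a : Fin k) : a + 1 ≠ a := by
  intro h
  nth_rewrite 2 [show a = a + 0 by ring] at h
  exact fin_one_ne_zero hk (add_left_cancel h)

lemma sub_one_ne (hk : 3 < k) (a : Fin k) : a - 1 ≠ a := by
  intro h
  apply add_one_ne hk a
  nth_rewrite 1 [← h]
  ring

lemma add_one_ne_sub_one (hk : 3 < k) (a : Fin k) : a + 1 ≠ a - 1 := by
  intro h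
  apply fin_two_ne_zero hk
  have h2 : a + (1 + 1) = a + 0 := by
    rw [← add_assoc, h]; ring
  exact add_left_cancel h2

lemma cast_fin_inj (hk0 : 0 < k) {x y : ℕ} (hx : x < k) (hy : y < k) :
    (x : Fin k) = (y : Fin k) ↔ x = y := by
  constructor
  · intro h
    have := congrArg Fin.val h
    rwa [Fin.val_cast_of_lt hx, Fin.val_cast_of_lt hy] at this
  · intro h; rw [h]

lemma cast_fin_cases {x y : ℕ} (hx : x ≤ k) (hy : y ≤ k) (h : (x : Fin k) = (y : Fin k)) :
    x = y ∨ (x = 0 ∧ y = k) ∨ (x = k ∧ y = 0) := by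
  have hv := congrArg Fin.val h
  have hxv : ((x : Fin k)).val = x % k := Fin.val_natCast x k
  have hyv : ((y : Fin k)).val = y % k := Fin.val_natCast y k
  rw [hxv, hyv] at hv
  have hx' : x % k = if x = k then 0 else x := by
    rcases eq_or_lt_of_le hx with rfl | hlt
    · simp [Nat.mod_self]
    · rw [Nat.mod_eq_of_lt hlt, if_neg (by omega)]
  have hy' : y % k = if y = k then 0 else y := by
    rcases eq_or_lt_of_le hy with rfl | hlt
    · simp [Nat.mod_self]
    · rw [Nat.mod_eq_of_lt hlt, if_neg (by omega)]
  rw [hx', hy'] at hv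
  split at hv <;> split at hv <;> omega

end Infra



section Upper

open Finset

/-- Abstract context extracted from a legal sequence in the product graph:
`p i, q i` is the `i`-th vertex, `f i, z i` its chosen fresh footprint. -/
structure Ctx (k l n : ℕ) [NeZero k] [NeZero l] where
  p : Fin n → Fin k
  q : Fin n → Fin l
  f : Fin n → Fin k
  z : Fin n → Fin l
  hk : 3 < k
  hl : 3 < l
  F1 : ∀ i, (f i = p i + 1 ∨ f i = p i - 1) ∨
    (f i = p i ∧ (z i = q i ∨ z i = q i + 1 ∨ z i = q i - 1))
  F2 : ∀ j i, j < i → ¬((f i = p j + 1 ∨ f i = p j - 1) ∨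
    (f i = p j ∧ (z i = q j ∨ z i = q j + 1 ∨ z i = q j - 1)))

namespace Ctx

variable {k l n : ℕ} [NeZero k] [NeZero l] (C : Ctx k l n)

/-- Type-A elements have footprint in an adjacent fiber. -/
lemma typeA_adj {i : Fin n} (h : C.f i ≠ C.p i) :
    C.f i = C.p i + 1 ∨ C.f i = C.p i - 1 := by
  rcases C.F1 i with h1 | ⟨h1, _⟩
  · exact h1
  · exact absurd h1 h

/-- Type-B elements have a footprint in the closed `C_l`-neighborhood. -/
lemma typeB_z {i : Fin n} (h : C.f i = C.p i) :
    C.z i = C.q i ∨ C.z i = C.q i + 1 ∨ C.z i = C.q i - 1 := by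
  rcases C.F1 i with h1 | ⟨_, h2⟩
  · rcases h1 with h1 | h1
    · exact ((add_one_ne C.hk (C.p i)) (h1.symm.trans h)).elim
    · exact ((sub_one_ne C.hk (C.p i)) (h1.symm.trans h)).elim
  · exact h2

lemma ne_add_one {j i : Fin n} (hij : j < i) : C.f i ≠ C.p j + 1 := by
  intro h; exact C.F2 j i hij (Or.inl (Or.inl h))

lemma ne_sub_one {j i : Fin n} (hij : j < i) : C.f i ≠ C.p j - 1 := by
  intro h; exact C.F2 j i hij (Or.inl (Or.inr h))

lemma z_fresh {j i : Fin n} (hij : j < i) (h : C.f i = C.p j) :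
    ¬(C.z i = C.q j ∨ C.z i = C.q j + 1 ∨ C.z i = C.q j - 1) := by
  intro h2; exact C.F2 j i hij (Or.inr ⟨h, h2⟩)

/-- A type-A element is the first element on its fiber. -/
lemma typeA_first {a : Fin n} (ha : C.f a ≠ C.p a) {j : Fin n} (hj : j < a) :
    C.p j ≠ C.p a := by
  intro h
  rcases C.typeA_adj ha with h1 | h1
  · exact C.ne_add_one hj (by rw [h1, h])
  · exact C.ne_sub_one hj (by rw [h1, h])

/-- Two type-A elements have distinct targets. -/
lemma typeA_tgt_inj {a a' : Fin n} (ha : C.f a ≠ C.p a) (_ : C.f a' ≠ C.p a')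
    (hlt : a < a') (h : C.f a = C.f a') : False := by
  rcases C.typeA_adj ha with h1 | h1
  · exact C.ne_add_one hlt (by rw [← h, h1]) 
  · exact C.ne_sub_one hlt (by rw [← h, h1])

/-- No type-B element on fiber `c` after a type-A footprint into `c`. -/
lemma no_typeB_after_recv {r i : Fin n} (hri : r < i) (hr : C.f r ≠ C.p r)
    (hi : C.f i = C.p i) (h : C.p i = C.f r) : False := by
  rcases C.typeA_adj hr with h1 | h1
  · exact C.ne_add_one hri (by rw [hi, h, h1])
  · exact C.ne_sub_one hri (by rw [hi, h, h1])

/-- The type-B elements on fiber `c`. -/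
def fibB (c : Fin k) : Finset (Fin n) :=
  univ.filter (fun i => C.p i = c ∧ C.f i = C.p i)

/-- The type-A elements. -/
def tA : Finset (Fin n) := univ.filter (fun i => C.f i ≠ C.p i)

/-- Fibers carrying at least one type-B element. -/
def hb : Finset (Fin k) := univ.filter (fun c => (C.fibB c).Nonempty)

/-- Type-A elements with both source and target fiber outside `hb`. -/
def taQ : Finset (Fin n) := C.tA.filter (fun a => C.p a ∉ C.hb ∧ C.f a ∉ C.hb)

lemma mem_fibB {c : Fin k} {i : Fin n} :
    i ∈ C.fibB c ↔ C.p i = c ∧ C.f i = C.p i := by simp [fibB]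

lemma mem_tA {i : Fin n} : i ∈ C.tA ↔ C.f i ≠ C.p i := by simp [tA]

lemma mem_hb {c : Fin k} : c ∈ C.hb ↔ (C.fibB c).Nonempty := by simp [hb]

/-- `hb` is independent in the cycle. -/
lemma hb_indep {c : Fin k} (h1 : c ∈ C.hb) (h2 : c + 1 ∈ C.hb) : False := by
  obtain ⟨i, hi⟩ := C.mem_hb.mp h1
  obtain ⟨i', hi'⟩ := C.mem_hb.mp h2
  rw [C.mem_fibB] at hi hi'
  rcases lt_trichotomy i i' with hlt | heq | hlt
  · exact C.ne_add_one hlt (by rw [hi'.2, hi'.1, hi.1])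
  · exact add_one_ne C.hk c (by rw [← hi'.1, ← heq, hi.1])
  · exact C.ne_sub_one hlt (by rw [hi.2, hi.1, hi'.1]; ring)

/-- The footprint triple in `C_l` has three distinct elements. -/
lemma triple_card (hl : 3 < l) (b : Fin l) :
    ({b, b + 1, b - 1} : Finset (Fin l)).card = 3 := by
  rw [Finset.card_insert_of_notMem, Finset.card_insert_of_notMem, Finset.card_singleton]
  · simp only [Finset.mem_singleton]
    exact fun h => add_one_ne_sub_one hl b h
  · simp only [Finset.mem_insert, Finset.mem_singleton]
    rintro (h | h)
    · exact (add_one_ne hl b) h.symm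
    · exact (sub_one_ne hl b) h.symm

/-- Per-fiber bound: type-B count plus receive/source penalties is at most `l - 2`. -/
lemma fiber_bound (c : Fin k) (hc : (C.fibB c).Nonempty) :
    (C.fibB c).card + (if ∃ r, C.f r ≠ C.p r ∧ C.f r = c then 1 else 0)
      + (if ∃ a, C.f a ≠ C.p a ∧ C.p a = c then 1 else 0) ≤ l - 2 := by
  classical
  set Fib : Finset (Fin n) := univ.filter (fun i => C.p i = c) with hFib
  have hFibne : Fib.Nonempty := by
    obtain ⟨i, hi⟩ := hc
    rw [C.mem_fibB] at hi
    exact ⟨i, by simp [hFib, hi.1]⟩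
  set j0 := Fib.min' hFibne with hj0def
  have hj0mem : C.p j0 = c := by
    have := Fib.min'_mem hFibne
    simpa [hFib] using this
  have hj0min : ∀ i, C.p i = c → j0 ≤ i := fun i hi =>
    Fib.min'_le i (by simp [hFib, hi])
  set Rc : Finset (Fin n) := univ.filter (fun r => C.f r ≠ C.p r ∧ C.f r = c) with hRc
  set E : Finset (Fin n) := C.fibB c ∪ Rc with hE
  have hEf : ∀ i ∈ E, C.f i = c := by
    intro i hi
    rcases Finset.mem_union.mp hi with h | h
    · rw [C.mem_fibB] at h; rw [h.2, h.1]
    · exact (Finset.mem_filter.mp h).2.2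
  have hRcFirst : ∀ i ∈ Rc, ∀ i' ∈ E, ¬(i < i') := by
    intro i hi i' hi' hlt
    rw [hRc, Finset.mem_filter] at hi
    rcases Finset.mem_union.mp hi' with h | h
    · rw [C.mem_fibB] at h
      exact C.no_typeB_after_recv hlt hi.2.1 h.2 (h.1.trans hi.2.2.symm)
    · rw [hRc, Finset.mem_filter] at h
      exact C.typeA_tgt_inj hi.2.1 h.2.1 hlt (hi.2.2.trans h.2.2.symm)
  have hzdist : ∀ i ∈ E, ∀ i' ∈ E, i < i' → C.z i ≠ C.z i' := by
    intro i hi i' hi' hlt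
    rcases Finset.mem_union.mp hi with h | h
    swap
    · exact absurd hlt (hRcFirst i h i' hi')
    rw [C.mem_fibB] at h
    have hfresh := C.z_fresh hlt ((hEf i' hi').trans h.1.symm)
    have hz := C.typeB_z h.2
    intro hzz
    exact hfresh (hzz ▸ hz)
  have hlate : ∀ i ∈ E, i ≠ j0 → j0 < i := by
    intro i hi hne
    rcases Finset.mem_union.mp hi with h | h
    · rw [C.mem_fibB] at h
      exact lt_of_le_of_ne (hj0min i h.1) (Ne.symm hne)
    · by_contra hcon
      push_neg at hcon
      have hij0 : i < j0 := lt_of_le_of_ne hcon hne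
      obtain ⟨b', hb'⟩ := hc
      have hb'2 := hb'
      rw [C.mem_fibB] at hb'2
      have : i < b' := lt_of_lt_of_le hij0 (hj0min b' hb'2.1)
      rw [hRc, Finset.mem_filter] at h
      exact C.no_typeB_after_recv this h.2.1 hb'2.2 (hb'2.1.trans h.2.2.symm)
  have havoid : ∀ i ∈ E, i ≠ j0 →
      C.z i ∈ (univ : Finset (Fin l)) \ {C.q j0, C.q j0 + 1, C.q j0 - 1} := by
    intro i hi hne
    have hj0i := hlate i hi hne
    have := C.z_fresh hj0i ((hEf i hi).trans hj0mem.symm)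
    simp only [Finset.mem_sdiff, Finset.mem_univ, true_and, Finset.mem_insert,
      Finset.mem_singleton]
    push_neg at this ⊢
    exact this
  -- card of E minus j0
  have hcard1 : (E.erase j0).card ≤ l - 3 := by
    have := Finset.card_le_card_of_injOn C.z
      (fun i hi => havoid i (Finset.mem_of_mem_erase hi) (Finset.ne_of_mem_erase hi))
      (by
        intro i hi i' hi' hzz
        by_contra hne
        rcases lt_or_gt_of_ne hne with hlt | hlt
        · exact hzdist i (Finset.mem_of_mem_erase hi) i' (Finset.mem_of_mem_erase hi') hlt hzz
        · exact hzdist i' (Finset.mem_of_mem_erase hi') i (Finset.mem_of_mem_erase hi) hlt hzz.symm)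
    calc (E.erase j0).card ≤ _ := this
    _ = l - 3 := by
      rw [Finset.card_sdiff_of_subset (Finset.subset_univ _), triple_card C.hl, Finset.card_univ,
        Fintype.card_fin]
  have hdisj : Disjoint (C.fibB c) Rc := by
    rw [Finset.disjoint_left]
    intro i hi hi'
    rw [C.mem_fibB] at hi
    exact (Finset.mem_filter.mp hi').2.1 hi.2
  have hEcard : E.card = (C.fibB c).card + Rc.card := Finset.card_union_of_disjoint hdisj
  have hRcard : Rc.card = (if ∃ r, C.f r ≠ C.p r ∧ C.f r = c then 1 else 0) := by
    split
    · next hex =>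
      obtain ⟨r, hr⟩ := hex
      have hrmem : r ∈ Rc := by
        rw [hRc, Finset.mem_filter]; exact ⟨Finset.mem_univ r, hr⟩
      have hle : Rc.card ≤ 1 := by
        rw [Finset.card_le_one]
        intro x hx y hy
        rw [hRc, Finset.mem_filter] at hx hy
        by_contra hne
        rcases lt_or_gt_of_ne hne with hlt | hlt
        · exact C.typeA_tgt_inj hx.2.1 hy.2.1 hlt (hx.2.2.trans hy.2.2.symm)
        · exact C.typeA_tgt_inj hy.2.1 hx.2.1 hlt (hy.2.2.trans hx.2.2.symm)
      have hge : 1 ≤ Rc.card := Finset.card_pos.mpr ⟨r, hrmem⟩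
      omega
    · next hex =>
      rw [Finset.card_eq_zero]
      rw [Finset.eq_empty_iff_forall_notMem]
      intro x hx
      rw [hRc, Finset.mem_filter] at hx
      exact hex ⟨x, hx.2⟩
  -- relate j0 and the source penalty
  by_cases hS : ∃ a, C.f a ≠ C.p a ∧ C.p a = c
  · -- first element of the fiber is type A, so j0 ∉ E
    obtain ⟨a, ha⟩ := hS
    have haj0 : a = j0 := by
      have h1 : j0 ≤ a := hj0min a ha.2
      have h2 : a ≤ j0 := by
        by_contra hcon
        push_neg at hcon
        exact C.typeA_first ha.1 hcon (hj0mem.trans ha.2.symm)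
      exact le_antisymm h2 h1
    have hj0notE : j0 ∉ E := by
      intro hmem
      rcases Finset.mem_union.mp hmem with h | h
      · rw [C.mem_fibB] at h
        rw [← haj0] at h
        exact ha.1 h.2
      · rw [hRc, Finset.mem_filter] at h
        rw [← haj0] at h
        rcases C.typeA_adj h.2.1 with h1 | h1
        · rw [← haj0, ha.2] at hj0mem
          rw [h.2.2, ha.2] at h1
          exact add_one_ne C.hk c h1.symm
        · rw [h.2.2, ha.2] at h1
          exact sub_one_ne C.hk c h1.symm
    have : E.erase j0 = E := Finset.erase_eq_of_notMem hj0notE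
    rw [this] at hcard1
    rw [if_pos (⟨a, ha⟩ : ∃ a, C.f a ≠ C.p a ∧ C.p a = c), ← hRcard]
    have hl4 := C.hl
    omega
  · -- first element is type B
    have hj0B : j0 ∈ C.fibB c := by
      rw [C.mem_fibB]
      refine ⟨hj0mem, ?_⟩
      by_contra hcon
      exact hS ⟨j0, hcon, hj0mem⟩
    have hj0E : j0 ∈ E := Finset.mem_union_left _ hj0B
    have : E.card = (E.erase j0).card + 1 := by
      rw [Finset.card_erase_of_mem hj0E]
      have : 1 ≤ E.card := Finset.card_pos.mpr ⟨j0, hj0E⟩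
      omega
    rw [if_neg hS, ← hRcard]
    have hl4 := C.hl
    omega

/-- `p` is injective on type-A elements. -/
lemma tA_src_inj : ∀ a ∈ C.tA, ∀ a' ∈ C.tA, C.p a = C.p a' → a = a' := by
  intro a ha a' ha' h
  rw [C.mem_tA] at ha ha'
  by_contra hne
  rcases lt_or_gt_of_ne hne with hlt | hlt
  · exact C.typeA_first ha' hlt h
  · exact C.typeA_first ha hlt h.symm

lemma tA_tgt_inj' : ∀ a ∈ C.tA, ∀ a' ∈ C.tA, C.f a = C.f a' → a = a' := by
  intro a ha a' ha' h
  rw [C.mem_tA] at ha ha'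
  by_contra hne
  rcases lt_or_gt_of_ne hne with hlt | hlt
  · exact C.typeA_tgt_inj ha ha' hlt h
  · exact C.typeA_tgt_inj ha' ha hlt h.symm

/-- Global counting: the length is bounded via `hb` and exceptional type-A elements. -/
lemma global_count : n ≤ C.hb.card * (l - 2) + C.taQ.card := by
  classical
  have hn : n = ∑ c : Fin k, (univ.filter (fun i => C.p i = c)).card := by
    have := Finset.card_eq_sum_card_fiberwise
      (f := C.p) (s := (univ : Finset (Fin n))) (t := (univ : Finset (Fin k)))
      (fun x _ => Finset.mem_univ _)
    simpa using this
  have hsplit : ∀ c, (univ.filter (fun i => C.p i = c)).card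
      = (C.fibB c).card + ((C.tA.filter (fun a => C.p a = c)).card) := by
    intro c
    have h1 : C.fibB c = (univ.filter (fun i => C.p i = c)).filter (fun i => C.f i = C.p i) := by
      rw [Finset.filter_filter]
      rfl
    have h2 : C.tA.filter (fun a => C.p a = c)
        = (univ.filter (fun i => C.p i = c)).filter (fun i => ¬(C.f i = C.p i)) := by
      simp only [tA, Finset.filter_filter]
      apply Finset.filter_congr
      intro x _
      constructor
      · rintro ⟨h1, h2⟩; exact ⟨h2, h1⟩
      · rintro ⟨h1, h2⟩; exact ⟨h2, h1⟩
    rw [h1, h2]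
    exact (Finset.card_filter_add_card_filter_not _).symm
  have htA : ∑ c : Fin k, (C.tA.filter (fun a => C.p a = c)).card = C.tA.card := by
    exact (Finset.card_eq_sum_card_fiberwise (f := C.p) (s := C.tA)
      (t := (univ : Finset (Fin k))) (fun x _ => Finset.mem_univ _)).symm
  have hBzero : ∀ c, c ∉ C.hb → (C.fibB c).card = 0 := by
    intro c hcn
    rw [Finset.card_eq_zero, ← Finset.not_nonempty_iff_eq_empty]
    rw [C.mem_hb] at hcn
    exact hcn
  have hBsum : ∑ c : Fin k, (C.fibB c).card = ∑ c ∈ C.hb, (C.fibB c).card := by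
    symm
    apply Finset.sum_subset (Finset.subset_univ _)
    intro c _ hcn
    exact hBzero c hcn
  -- summed fiber bound
  have hfibsum : ∑ c ∈ C.hb, (C.fibB c).card
      + ∑ c ∈ C.hb, (if ∃ r, C.f r ≠ C.p r ∧ C.f r = c then 1 else 0)
      + ∑ c ∈ C.hb, (if ∃ a, C.f a ≠ C.p a ∧ C.p a = c then 1 else 0)
      ≤ C.hb.card * (l - 2) := by
    rw [← Finset.sum_add_distrib, ← Finset.sum_add_distrib]
    calc _ ≤ ∑ _c ∈ C.hb, (l - 2) := by
            apply Finset.sum_le_sum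
            intro c hc
            exact C.fiber_bound c (C.mem_hb.mp hc)
    _ = C.hb.card * (l - 2) := by rw [Finset.sum_const, smul_eq_mul]
  -- the penalties absorb type-A elements with source/target in hb
  have hrecv : (C.tA.filter (fun a => C.f a ∈ C.hb)).card
      ≤ ∑ c ∈ C.hb, (if ∃ r, C.f r ≠ C.p r ∧ C.f r = c then 1 else 0) := by
    rw [← Finset.card_filter]
    apply Finset.card_le_card_of_injOn C.f
    · intro a ha
      rw [Finset.mem_coe, Finset.mem_filter] at ha
      rw [Finset.mem_coe, Finset.mem_filter]
      obtain ⟨ha1, ha2⟩ := ha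
      have := C.mem_tA.mp ha1
      exact ⟨ha2, ⟨a, this, rfl⟩⟩
    · intro a ha a' ha' h
      rw [Finset.coe_filter, Set.mem_setOf_eq] at ha ha'
      exact C.tA_tgt_inj' a ha.1 a' ha'.1 h
  have hsrc : (C.tA.filter (fun a => C.p a ∈ C.hb)).card
      ≤ ∑ c ∈ C.hb, (if ∃ a, C.f a ≠ C.p a ∧ C.p a = c then 1 else 0) := by
    rw [← Finset.card_filter]
    apply Finset.card_le_card_of_injOn C.p
    · intro a ha
      rw [Finset.mem_coe, Finset.mem_filter] at ha
      rw [Finset.mem_coe, Finset.mem_filter]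
      obtain ⟨ha1, ha2⟩ := ha
      have := C.mem_tA.mp ha1
      exact ⟨ha2, ⟨a, this, rfl⟩⟩
    · intro a ha a' ha' h
      rw [Finset.coe_filter, Set.mem_setOf_eq] at ha ha'
      exact C.tA_src_inj a ha.1 a' ha'.1 h
  have hcover : C.tA.card ≤ C.taQ.card + ((C.tA.filter (fun a => C.p a ∈ C.hb)).card
      + (C.tA.filter (fun a => C.f a ∈ C.hb)).card) := by
    calc C.tA.card ≤ (C.taQ ∪ (C.tA.filter (fun a => C.p a ∈ C.hb)
          ∪ C.tA.filter (fun a => C.f a ∈ C.hb))).card := by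
          apply Finset.card_le_card
          intro a ha
          rw [Finset.mem_union, Finset.mem_union]
          by_cases h1 : C.p a ∈ C.hb
          · exact Or.inr (Or.inl (Finset.mem_filter.mpr ⟨ha, h1⟩))
          · by_cases h2 : C.f a ∈ C.hb
            · exact Or.inr (Or.inr (Finset.mem_filter.mpr ⟨ha, h2⟩))
            · exact Or.inl (Finset.mem_filter.mpr ⟨ha, h1, h2⟩)
    _ ≤ _ := le_trans (Finset.card_union_le _ _)
          (by exact Nat.add_le_add_left (Finset.card_union_le _ _) _)
  calc n = ∑ c : Fin k, (univ.filter (fun i => C.p i = c)).card := hn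
  _ = ∑ c : Fin k, (C.fibB c).card + C.tA.card := by
        rw [← htA, ← Finset.sum_add_distrib]
        exact Finset.sum_congr rfl (fun c _ => hsplit c)
  _ ≤ _ := by omega

lemma mem_taQ {a : Fin n} : a ∈ C.taQ ↔
    (C.f a ≠ C.p a ∧ C.p a ∉ C.hb ∧ C.f a ∉ C.hb) := by
  simp only [taQ, Finset.mem_filter, mem_tA, and_assoc]

/-- The crucial temporal lemma: a maximal run between two `hb`-fibers cannot consist
entirely of sources of exceptional type-A elements. -/
lemma no_full_gap {b : Fin k} {d : ℕ} (hbm : b ∈ C.hb)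
    (hd2 : 2 ≤ d) (hdk : d ≤ k)
    (hbd : b + (d : Fin k) ∈ C.hb)
    (hfull : ∀ j, 0 < j → j < d → ∃ a ∈ C.taQ, C.p a = b + (j : Fin k)) : False := by
  classical
  have hk4 := C.hk
  have hl4 := C.hl
  set g : ℕ := d - 1 with hg
  have hg1 : 1 ≤ g := by omega
  obtain ⟨i0, hi0⟩ := C.mem_hb.mp hbm
  obtain ⟨i1, hi1⟩ := C.mem_hb.mp hbd
  rw [C.mem_fibB] at hi0 hi1
  set A : ℕ → Fin n := fun j => if h : 0 < j ∧ j < d then (hfull j h.1 h.2).choose else i0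
    with hAdef
  have hA : ∀ j, 0 < j → j < d → A j ∈ C.taQ ∧ C.p (A j) = b + (j : Fin k) := by
    intro j h1 h2
    have hspec := (hfull j h1 h2).choose_spec
    simp only [hAdef, dif_pos (⟨h1, h2⟩ : 0 < j ∧ j < d)]
    exact ⟨hspec.1, hspec.2⟩
  have hcanc : ∀ x y : ℕ, x < d → y < d → b + (x : Fin k) = b + (y : Fin k) → x = y := by
    intro x y hx hy h
    exact (cast_fin_inj (by omega) (by omega) (by omega)).mp (add_left_cancel h)
  have hcanc2 : ∀ x y : ℕ, x ≤ d → y ≤ d → b + (x : Fin k) = b + (y : Fin k) →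
      x = y ∨ (x = 0 ∧ y = k) ∨ (x = k ∧ y = 0) := by
    intro x y hx hy h
    exact cast_fin_cases (by omega) (by omega) (add_left_cancel h)
  have hc1 : ∀ j : ℕ, ((j + 1 : ℕ) : Fin k) = (j : Fin k) + 1 := by
    intro j; push_cast; ring
  have hc2 : ∀ j : ℕ, 1 ≤ j → ((j - 1 : ℕ) : Fin k) = (j : Fin k) - 1 := by
    intro j hj; rw [Nat.cast_sub hj, Nat.cast_one]
  have hAne : ∀ x y : ℕ, 0 < x → x < d → 0 < y → y < d → x ≠ y → A x ≠ A y := by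
    intro x y hx1 hx2 hy1 hy2 hne h
    apply hne
    apply hcanc x y hx2 hy2
    rw [← (hA x hx1 hx2).2, ← (hA y hy1 hy2).2, h]
  have htgt : ∀ j, 0 < j → j < d →
      C.f (A j) = b + ((j + 1 : ℕ) : Fin k) ∨ C.f (A j) = b + ((j - 1 : ℕ) : Fin k) := by
    intro j h1 h2
    obtain ⟨hQ, hp⟩ := hA j h1 h2
    rcases C.typeA_adj (C.mem_taQ.mp hQ).1 with h | h
    · left; rw [h, hp, hc1 j, add_assoc]
    · right; rw [h, hp, hc2 j h1, add_sub_assoc]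
  -- surjectivity of targets onto the gap
  have hTinj : ∀ x ∈ Finset.Icc 1 g, ∀ y ∈ Finset.Icc 1 g,
      C.f (A x) = C.f (A y) → x = y := by
    intro x hx y hy h
    rw [Finset.mem_Icc] at hx hy
    by_contra hne
    have h1 := hA x (by omega) (by omega)
    have h2 := hA y (by omega) (by omega)
    have := C.tA_tgt_inj' (A x) (C.mem_tA.mpr (C.mem_taQ.mp h1.1).1)
      (A y) (C.mem_tA.mpr (C.mem_taQ.mp h2.1).1) h
    exact hAne x y (by omega) (by omega) (by omega) (by omega) hne this
  have hsurj : ∀ j', 1 ≤ j' → j' ≤ g →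
      ∃ j, (1 ≤ j ∧ j ≤ g) ∧ C.f (A j) = b + (j' : Fin k) := by
    intro j' h1' h2'
    set G : Finset (Fin k) := (Finset.Icc 1 g).image (fun j : ℕ => b + (j : Fin k)) with hGdef
    set T : Finset (Fin k) := (Finset.Icc 1 g).image (fun j : ℕ => C.f (A j)) with hTdef
    have hTsub : T ⊆ G := by
      intro x hx
      rw [hTdef, Finset.mem_image] at hx
      obtain ⟨j, hj, rfl⟩ := hx
      rw [Finset.mem_Icc] at hj
      rcases htgt j (by omega) (by omega) with h | h
      · have hjd : j + 1 < d := by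
          rcases Nat.lt_or_ge (j+1) d with h' | h'
          · exact h'
          · exfalso
            have hj1 : j + 1 = d := by omega
            rw [hj1] at h
            have := (C.mem_taQ.mp (hA j (by omega) (by omega)).1).2.2
            rw [h] at this
            exact this hbd
        rw [hGdef, Finset.mem_image]
        exact ⟨j + 1, Finset.mem_Icc.mpr (by omega), h.symm⟩
      · have hj1 : 1 ≤ j - 1 := by
          rcases Nat.lt_or_ge (j - 1) 1 with h' | h'
          · exfalso
            have : j = 1 := by omega
            subst this
            simp only [Nat.sub_self, Nat.cast_zero, add_zero] at h
            have := (C.mem_taQ.mp (hA 1 (by omega) (by omega)).1).2.2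
            rw [h] at this
            exact this hbm
          · exact h'
        rw [hGdef, Finset.mem_image]
        exact ⟨j - 1, Finset.mem_Icc.mpr (by omega), h.symm⟩
    have hGcard : G.card = g := by
      rw [hGdef, Finset.card_image_of_injOn, Nat.card_Icc]
      · omega
      · intro x hx y hy h
        rw [Finset.mem_coe, Finset.mem_Icc] at hx hy
        exact hcanc x y (by omega) (by omega) h
    have hTcard : T.card = g := by
      rw [hTdef, Finset.card_image_of_injOn, Nat.card_Icc]
      · omega
      · intro x hx y hy h
        rw [Finset.mem_coe, Finset.mem_Icc] at hx hy
        exact hTinj x (Finset.mem_Icc.mpr hx) y (Finset.mem_Icc.mpr hy) h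
    have hTG : T = G := Finset.eq_of_subset_of_card_le hTsub (by rw [hGcard, hTcard])
    have hmem : b + (j' : Fin k) ∈ T := by
      rw [hTG, hGdef, Finset.mem_image]
      exact ⟨j', Finset.mem_Icc.mpr ⟨h1', h2'⟩, rfl⟩
    rw [hTdef, Finset.mem_image] at hmem
    obtain ⟨j, hj, hjf⟩ := hmem
    exact ⟨j, Finset.mem_Icc.mp hj, hjf⟩
  -- the pairing structure
  have pairing : ∀ j, j ≤ g → 1 ≤ j →
      (j % 2 = 1 → C.f (A j) = b + ((j + 1 : ℕ) : Fin k) ∧ j < g) ∧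
      (j % 2 = 0 → C.f (A j) = b + ((j - 1 : ℕ) : Fin k)) := by
    intro j
    induction j using Nat.strong_induction_on with
    | _ j IH =>
      intro hjg hj1
      constructor
      · intro hodd
        rcases htgt j (by omega) (by omega) with hf | hf
        · refine ⟨hf, ?_⟩
          by_contra hcon
          have hjg' : j = g := by omega
          have hj1d : j + 1 = d := by omega
          rw [hj1d] at hf
          have := (C.mem_taQ.mp (hA j (by omega) (by omega)).1).2.2
          rw [hf] at this
          exact this hbd
        · exfalso
          by_cases hj1' : j = 1
          · subst hj1'
            simp only [Nat.sub_self, Nat.cast_zero, add_zero] at hf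
            have := (C.mem_taQ.mp (hA 1 (by omega) (by omega)).1).2.2
            rw [hf] at this
            exact this hbm
          · have hj3 : 3 ≤ j := by omega
            have hIH := ((IH (j - 2) (by omega) (by omega) (by omega)).1 (by omega)).1
            have : j - 2 + 1 = j - 1 := by omega
            rw [this] at hIH
            have heq : C.f (A j) = C.f (A (j - 2)) := by rw [hf, hIH]
            have := hTinj j (Finset.mem_Icc.mpr (by omega)) (j - 2)
              (Finset.mem_Icc.mpr (by omega)) heq
            omega
      · intro heven
        have hj2 : 2 ≤ j := by omega
        obtain ⟨m, ⟨hm1, hm2⟩, hfm⟩ := hsurj (j - 1) (by omega) (by omega)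
        have hmj : m = j := by
          rcases htgt m (by omega) (by omega) with h | h
          · -- m + 1 = j - 1, i.e. m = j - 2
            rw [h] at hfm
            have := hcanc2 (m + 1) (j - 1) (by omega) (by omega) hfm
            have hmj2 : m = j - 2 := by omega
            exfalso
            by_cases hj4 : 4 ≤ j
            · have hIH := (IH (j - 2) (by omega) (by omega) (by omega)).2 (by omega)
              rw [← hmj2] at hIH
              rw [h] at hIH
              have := hcanc (m + 1) (m - 1) (by omega) (by omega) hIH
              omega
            · omega
          · rw [h] at hfm
            have := hcanc (m - 1) (j - 1) (by omega) (by omega) hfm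
            omega
        rw [← hmj]
        have heq : m - 1 = j - 1 := by omega
        rw [heq]
        exact hfm
  -- parity of the gap
  by_cases hgodd : g % 2 = 1
  · exact absurd ((pairing g (le_refl g) hg1).1 hgodd).2 (by omega)
  have hgeven : g % 2 = 0 := by omega
  have hg2 : 2 ≤ g := by omega
  -- forward chain
  have fwd : ∀ j, j ≤ g → j % 2 = 1 → i0 < A j := by
    intro j
    induction j using Nat.strong_induction_on with
    | _ j IH =>
      intro hjg hodd
      have hj1 : 1 ≤ j := by omega
      have hpj : C.p (A j) = b + (j : Fin k) := (hA j (by omega) (by omega)).2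
      by_cases hj1' : j = 1
      · subst hj1'
        rcases lt_trichotomy i0 (A 1) with h | h | h
        · exact h
        · exfalso
          have : C.p i0 = C.p (A 1) := by rw [h]
          rw [hi0.1, hpj] at this
          have := hcanc 0 1 (by omega) (by omega) (by simpa using this)
          omega
        · exfalso
          apply C.ne_sub_one h
          rw [hi0.2, hi0.1, hpj]
          simp only [Nat.cast_one]
          ring
      · have hj3 : 3 ≤ j := by omega
        have hIH : i0 < A (j - 2) := IH (j - 2) (by omega) (by omega) (by omega)
        have hstep : A (j - 2) < A j := by
          rcases lt_trichotomy (A (j - 2)) (A j) with h | h | h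
          · exact h
          · exfalso
            exact hAne (j - 2) j (by omega) (by omega) (by omega) (by omega) (by omega) h
          · exfalso
            apply C.ne_sub_one h
            have hfp := ((pairing (j - 2) (by omega) (by omega)).1 (by omega)).1
            have he : j - 2 + 1 = j - 1 := by omega
            rw [he] at hfp
            rw [hfp, hpj, hc2 j (by omega), add_sub_assoc]
        exact lt_trans hIH hstep
  -- backward chain
  have bwd : ∀ j, j ≤ g → j % 2 = 0 → 2 ≤ j → A j < i0 := by
    intro j
    induction j using Nat.strong_induction_on with
    | _ j IH =>
      intro hjg heven hj2
      have hpj : C.p (A j) = b + (j : Fin k) := (hA j (by omega) (by omega)).2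
      have hfj : C.f (A j) = b + ((j - 1 : ℕ) : Fin k) :=
        (pairing j hjg (by omega)).2 heven
      by_cases hj2' : j = 2
      · subst hj2'
        rcases lt_trichotomy (A 2) i0 with h | h | h
        · exact h
        · exfalso
          have : C.p (A 2) = C.p i0 := by rw [h]
          rw [hi0.1, hpj] at this
          have := hcanc 2 0 (by omega) (by omega) (by simpa using this)
          omega
        · exfalso
          apply C.ne_add_one h
          rw [hfj, hi0.1]
          norm_num
      · have hj4 : 4 ≤ j := by omega
        have hIH : A (j - 2) < i0 := IH (j - 2) (by omega) (by omega) (by omega) (by omega)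
        have hstep : A j < A (j - 2) := by
          rcases lt_trichotomy (A j) (A (j - 2)) with h | h | h
          · exact h
          · exfalso
            exact hAne j (j - 2) (by omega) (by omega) (by omega) (by omega) (by omega) h
          · exfalso
            apply C.ne_add_one h
            have hp2 : C.p (A (j - 2)) = b + ((j - 2 : ℕ) : Fin k) :=
              (hA (j - 2) (by omega) (by omega)).2
            rw [hfj, hp2]
            have he : ((j - 1 : ℕ) : Fin k) = ((j - 2 : ℕ) : Fin k) + 1 := by
              have : j - 1 = (j - 2) + 1 := by omega
              rw [this, hc1]
            rw [he, add_assoc]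
        exact lt_trans hstep hIH
  -- close the cycle
  have hx1 : i0 < A (g - 1) := fwd (g - 1) (by omega) (by omega)
  have hx2 : A (g - 1) < i1 := by
    rcases lt_trichotomy (A (g - 1)) i1 with h | h | h
    · exact h
    · exfalso
      have : C.p (A (g - 1)) = C.p i1 := by rw [h]
      rw [hi1.1, (hA (g - 1) (by omega) (by omega)).2] at this
      rcases hcanc2 (g - 1) d (by omega) (by omega) this with h' | h' | h' <;> omega
    · exfalso
      apply C.ne_sub_one h
      have hfp := ((pairing (g - 1) (by omega) (by omega)).1 (by omega)).1
      have he : g - 1 + 1 = g := by omega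
      rw [he] at hfp
      rw [hfp, hi1.1, show (d : ℕ) = g + 1 by omega, hc1]
      ring
  have hx3 : i1 < A g := by
    rcases lt_trichotomy i1 (A g) with h | h | h
    · exact h
    · exfalso
      have : C.p i1 = C.p (A g) := by rw [h]
      rw [hi1.1, (hA g (by omega) (by omega)).2] at this
      rcases hcanc2 d g (by omega) (by omega) this with h' | h' | h' <;> omega
    · exfalso
      apply C.ne_add_one h
      rw [hi1.2, hi1.1, (hA g (by omega) (by omega)).2]
      have : (d : ℕ) = g + 1 := by omega
      rw [this, hc1, add_assoc]
  have hx4 : A g < i0 := bwd g (le_refl g) hgeven hg2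
  have : i0 < i0 := lt_trans (lt_trans (lt_trans hx1 hx2) hx3) hx4
  exact lt_irrefl _ this

/-- Counting using the gaps: twice the `hb`-fibers plus exceptional type-A elements
fit inside the cycle. -/
lemma gap_bound (hne : C.hb.Nonempty) : 2 * C.hb.card + C.taQ.card ≤ k := by
  classical
  have hk4 := C.hk
  have main : ∀ b : Fin k, ∃ j : ℕ, b ∈ C.hb → (0 < j ∧ j < k ∧
      (∀ m : ℕ, 0 < m → m ≤ j → b + (m : Fin k) ∉ C.hb) ∧
      (∀ a ∈ C.taQ, C.p a ≠ b + (j : Fin k))) := by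
    intro b
    by_cases hbm : b ∈ C.hb
    swap
    · exact ⟨1, fun h => absurd h hbm⟩
    have hexd : ∃ m : ℕ, 0 < m ∧ b + (m : Fin k) ∈ C.hb := by
      refine ⟨k, by omega, ?_⟩
      rw [Fin.natCast_self, add_zero]
      exact hbm
    set d := Nat.find hexd with hd
    obtain ⟨hd0, hdmem⟩ := Nat.find_spec hexd
    rw [← hd] at hdmem
    have hdmin : ∀ m : ℕ, 0 < m → m < d → b + (m : Fin k) ∉ C.hb := by
      intro m h1 h2 hmem
      exact Nat.find_min hexd h2 ⟨h1, hmem⟩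
    have hdk : d ≤ k := Nat.find_min' hexd ⟨by omega, by rw [Fin.natCast_self, add_zero]; exact hbm⟩
    have hd2 : 2 ≤ d := by
      rcases Nat.lt_or_ge d 2 with h | h
      · exfalso
        have hd1 : d = 1 := by omega
        rw [hd1] at hdmem
        rw [Nat.cast_one] at hdmem
        exact C.hb_indep hbm hdmem
      · exact h
    have hclaim : ∃ j, 0 < j ∧ j < d ∧ ∀ a ∈ C.taQ, C.p a ≠ b + (j : Fin k) := by
      by_contra hcon
      push_neg at hcon
      apply C.no_full_gap hbm hd2 hdk hdmem
      intro j h1 h2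
      obtain ⟨a, ha1, ha2⟩ := hcon j h1 h2
      exact ⟨a, ha1, ha2⟩
    obtain ⟨j, hj0, hjd, hjQ⟩ := hclaim
    refine ⟨j, fun _ => ⟨hj0, by omega, ?_, hjQ⟩⟩
    intro m h1 h2
    exact hdmin m h1 (by omega)
  choose F hF using main
  set w : Fin k → Fin k := fun b => b + ((F b : ℕ) : Fin k) with hw
  have hwinj : ∀ b ∈ C.hb, ∀ b' ∈ C.hb, w b = w b' → b = b' := by
    have key : ∀ b ∈ C.hb, ∀ b' ∈ C.hb, F b' ≤ F b → w b = w b' → b = b' := by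
      intro b hb b' hb' hle heq
      replace heq : b + ((F b : ℕ) : Fin k) = b' + ((F b' : ℕ) : Fin k) := heq
      have hb'eq : b' = b + ((F b - F b' : ℕ) : Fin k) := by
        rw [Nat.cast_sub hle]
        linear_combination -heq
      rcases Nat.eq_zero_or_pos (F b - F b') with h0 | h0
      · have : F b = F b' := by
          have := (hF b hb).1
          have := (hF b' hb').1
          omega
        rw [this] at heq
        exact add_right_cancel heq
      · exfalso
        apply (hF b hb).2.2.1 (F b - F b') h0 (by omega)
        rw [← hb'eq]
        exact hb'
    intro b hb b' hb' heq
    rcases le_total (F b') (F b) with h | h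
    · exact key b hb b' hb' h heq
    · exact (key b' hb' b hb h heq.symm).symm
  have hwout : ∀ b ∈ C.hb, w b ∉ C.hb := by
    intro b hb
    exact (hF b hb).2.2.1 (F b) (hF b hb).1 (le_refl _)
  have hwQ : ∀ b ∈ C.hb, ∀ a ∈ C.taQ, C.p a ≠ w b := by
    intro b hb a ha
    exact (hF b hb).2.2.2 a ha
  set S2 : Finset (Fin k) := C.hb.image w with hS2
  set S3 : Finset (Fin k) := C.taQ.image C.p with hS3
  have hS2card : S2.card = C.hb.card := by
    rw [hS2]
    apply Finset.card_image_of_injOn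
    intro b hb b' hb' h
    exact hwinj b (Finset.mem_coe.mp hb) b' (Finset.mem_coe.mp hb') h
  have hS3card : S3.card = C.taQ.card := by
    rw [hS3]
    apply Finset.card_image_of_injOn
    intro a ha a' ha' h
    rw [Finset.mem_coe] at ha ha'
    exact C.tA_src_inj a (C.mem_tA.mpr (C.mem_taQ.mp ha).1)
      a' (C.mem_tA.mpr (C.mem_taQ.mp ha').1) h
  have hd12 : Disjoint C.hb S2 := by
    rw [Finset.disjoint_right]
    intro x hx
    rw [hS2, Finset.mem_image] at hx
    obtain ⟨b, hb, rfl⟩ := hx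
    exact hwout b hb
  have hd13 : Disjoint C.hb S3 := by
    rw [Finset.disjoint_right]
    intro x hx
    rw [hS3, Finset.mem_image] at hx
    obtain ⟨a, ha, rfl⟩ := hx
    exact (C.mem_taQ.mp ha).2.1
  have hd23 : Disjoint S2 S3 := by
    rw [Finset.disjoint_right]
    intro x hx hx2
    rw [hS3, Finset.mem_image] at hx
    rw [hS2, Finset.mem_image] at hx2
    obtain ⟨a, ha, rfl⟩ := hx
    obtain ⟨b, hb, heq⟩ := hx2
    exact hwQ b hb a ha heq.symm
  have hunion : (C.hb ∪ S2 ∪ S3).card = C.hb.card + S2.card + S3.card := by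
    rw [Finset.card_union_of_disjoint, Finset.card_union_of_disjoint hd12]
    rw [Finset.disjoint_union_left]
    exact ⟨hd13, hd23⟩
  have hle : (C.hb ∪ S2 ∪ S3).card ≤ k := by
    calc (C.hb ∪ S2 ∪ S3).card ≤ (univ : Finset (Fin k)).card := Finset.card_le_univ _
    _ = k := by rw [Finset.card_univ, Fintype.card_fin]
  omega

include C in
/-- The abstract upper bound. -/
theorem bound : n ≤ k / 2 * (l - 2) + k % 2 := by
  classical
  have hk4 := C.hk
  have hl4 := C.hl
  have hglobal := C.global_count
  have hQk : C.taQ.card ≤ k := by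
    calc C.taQ.card = (C.taQ.image C.p).card := by
          symm
          apply Finset.card_image_of_injOn
          intro a ha a' ha' h
          rw [Finset.mem_coe] at ha ha'
          exact C.tA_src_inj a (C.mem_tA.mpr (C.mem_taQ.mp ha).1)
            a' (C.mem_tA.mpr (C.mem_taQ.mp ha').1) h
    _ ≤ (univ : Finset (Fin k)).card := Finset.card_le_univ _
    _ = k := by rw [Finset.card_univ, Fintype.card_fin]
  have h5 : k / 2 * 2 ≤ k / 2 * (l - 2) := Nat.mul_le_mul_left _ (by omega)
  by_cases hne : C.hb.Nonempty
  · have hgap := C.gap_bound hne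
    obtain ⟨M, hM⟩ : ∃ M, l - 2 = M + 2 := ⟨l - 4, by omega⟩
    have h1 : C.hb.card * (l - 2) = C.hb.card * M + 2 * C.hb.card := by rw [hM]; ring
    have h2 : k / 2 * (l - 2) = (k / 2) * M + 2 * (k / 2) := by rw [hM]; ring
    have h3 : C.hb.card ≤ k / 2 := by omega
    have h4 : C.hb.card * M ≤ (k / 2) * M := Nat.mul_le_mul_right M h3
    omega
  · rw [Finset.not_nonempty_iff_eq_empty] at hne
    have h0 : C.hb.card * (l - 2) = 0 := by rw [hne]; simp
    omega

end Ctx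

end Upper

theorem upper_bound (hk : 3 < k) (hl : 3 < l) (L : List (Fin k × Fin l))
    (hL : IsLegalSeq (GG k l) L) :
    L.length ≤ k / 2 * (l - 2) + k % 2 := by
  haveI : NeZero k := ⟨by omega⟩
  haveI : NeZero l := ⟨by omega⟩
  classical
  obtain ⟨hnodup, hleg⟩ := hL
  choose u hu1 hu2 using hleg
  refine Ctx.bound (C := ⟨fun i => (L.get i).1, fun i => (L.get i).2,
    fun i => (u i).1, fun i => (u i).2, hk, hl, ?_, ?_⟩)
  · intro i
    exact (mem_closedNbhd hk hl (L.get i) (u i)).mp (hu1 i)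
  · intro j i hij hcon
    exact hu2 i j (by exact hij) ((mem_closedNbhd hk hl (L.get j) (u i)).mpr hcon)


section Lower

variable [NeZero k] [NeZero l]

lemma cast_eq_add_one_iff (hk : 3 < k) {x y : ℕ} (hx : x < k) (hy : y < k) :
    ((x : Fin k) = (y : Fin k) + 1) ↔ (y + 1 = x ∨ (y + 1 = k ∧ x = 0)) := by
  rw [show ((y : Fin k) + 1) = ((y + 1 : ℕ) : Fin k) by push_cast; ring]
  constructor
  · intro h
    rcases cast_fin_cases (by omega) (by omega) h with h' | h' | h' <;> omega
  · rintro (h | ⟨h1, h2⟩)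
    · rw [h]
    · rw [h1, h2, Fin.natCast_self, Nat.cast_zero]

lemma cast_eq_sub_one_iff (hk : 3 < k) {x y : ℕ} (hx : x < k) (hy : y < k) :
    ((x : Fin k) = (y : Fin k) - 1) ↔ (x + 1 = y ∨ (x + 1 = k ∧ y = 0)) := by
  have : ((x : Fin k) = (y : Fin k) - 1) ↔ ((y : Fin k) = (x : Fin k) + 1) := by
    constructor
    · intro h; rw [h]; ring
    · intro h; rw [h]; ring
  rw [this, cast_eq_add_one_iff hk hy hx]

/-- Closed-neighborhood membership, in purely arithmetic form. -/
lemma mem_cn_nat (hk : 3 < k) (hl : 3 < l) {a b a' b' : ℕ}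
    (ha : a < k) (hb : b < l) (ha' : a' < k) (hb' : b' < l) :
    (((a : ℕ) : Fin k), ((b : ℕ) : Fin l)) ∈
        closedNbhd (GG k l) (((a' : ℕ) : Fin k), ((b' : ℕ) : Fin l)) ↔
      ((a' + 1 = a ∨ (a' + 1 = k ∧ a = 0)) ∨ (a + 1 = a' ∨ (a + 1 = k ∧ a' = 0)) ∨
        (a = a' ∧ (b = b' ∨ (b' + 1 = b ∨ (b' + 1 = l ∧ b = 0)) ∨
          (b + 1 = b' ∨ (b + 1 = l ∧ b' = 0))))) := by
  rw [mem_closedNbhd hk hl]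
  simp only
  rw [cast_eq_add_one_iff hk ha ha', cast_eq_sub_one_iff hk ha ha',
    cast_eq_add_one_iff hl hb hb', cast_eq_sub_one_iff hl hb hb',
    cast_fin_inj (by omega) ha ha', cast_fin_inj (by omega) hb hb']
  tauto

/-- Package a function with explicit footprints into a dominating sequence. -/
lemma isDomSeq_ofFn {N : ℕ} (s w : Fin N → Fin k × Fin l)
    (hinj : Function.Injective s)
    (hw1 : ∀ i, w i ∈ closedNbhd (GG k l) (s i))
    (hw2 : ∀ i j : Fin N, j < i → w i ∉ closedNbhd (GG k l) (s j))
    (hdom : ∀ v, ∃ i, v ∈ closedNbhd (GG k l) (s i)) :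
    IsDomSeq (GG k l) (List.ofFn s) ∧ (List.ofFn s).length = N := by
  have hlen : (List.ofFn s).length = N := List.length_ofFn (f := s)
  refine ⟨⟨⟨List.nodup_ofFn.mpr hinj, ?_⟩, ?_⟩, hlen⟩
  · intro i
    refine ⟨w (Fin.cast hlen i), ?_, ?_⟩
    · rw [List.get_ofFn]
      exact hw1 _
    · intro j hji
      rw [List.get_ofFn]
      apply hw2
      show (Fin.cast hlen j : ℕ) < (Fin.cast hlen i : ℕ)
      exact hji
  · intro v
    obtain ⟨i, hi⟩ := hdom v
    exact ⟨s i, (List.mem_ofFn (f := s) (a := s i)).mpr ⟨i, rfl⟩, hi⟩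

end Lower

theorem lower_even (hk : 3 < k) (hl : 3 < l) (hke : k % 2 = 0) :
    ∃ L, IsDomSeq (GG k l) L ∧ L.length = k / 2 * (l - 2) := by
  haveI : NeZero k := ⟨by omega⟩
  haveI : NeZero l := ⟨by omega⟩
  set N := k / 2 * (l - 2) with hN
  set s : Fin N → Fin k × Fin l := fun i =>
    (((2 * (i.val / (l - 2)) : ℕ) : Fin k), ((i.val % (l - 2) : ℕ) : Fin l)) with hs
  set w : Fin N → Fin k × Fin l := fun i =>
    (((2 * (i.val / (l - 2)) : ℕ) : Fin k), ((i.val % (l - 2) + 1 : ℕ) : Fin l)) with hw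
  have hl2 : 0 < l - 2 := by omega
  have hdec : ∀ i : Fin N, i.val / (l - 2) < k / 2 ∧ i.val % (l - 2) < l - 2 ∧
      i.val = (l - 2) * (i.val / (l - 2)) + i.val % (l - 2) := by
    intro i
    refine ⟨?_, Nat.mod_lt _ hl2, (Nat.div_add_mod i.val (l - 2)).symm⟩
    rw [Nat.div_lt_iff_lt_mul hl2]
    exact i.isLt
  have hbfib : ∀ i : Fin N, 2 * (i.val / (l - 2)) < k := by
    intro i
    have := (hdec i).1
    omega
  suffices hsuff : IsDomSeq (GG k l) (List.ofFn s) ∧ (List.ofFn s).length = N by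
    exact ⟨List.ofFn s, hsuff.1, by rw [hsuff.2]⟩
  apply isDomSeq_ofFn s w
  · -- injectivity
    intro i j hij
    rw [hs] at hij
    simp only [Prod.mk.injEq] at hij
    have h1 := (cast_fin_inj (by omega) (hbfib i) (hbfib j)).mp hij.1
    have h2 := (cast_fin_inj (show 0 < l by omega)
      (by have := (hdec i).2.1; omega) (by have := (hdec j).2.1; omega)).mp hij.2
    have hi := (hdec i).2.2
    have hj := (hdec j).2.2
    apply Fin.ext
    have : i.val / (l - 2) = j.val / (l - 2) := by omega
    rw [this] at hi
    omega
  · -- footprints are in closed neighborhoods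
    intro i
    rw [hs, hw]
    simp only
    rw [mem_cn_nat hk hl (hbfib i) (by have := (hdec i).2.1; omega) (hbfib i)
      (by have := (hdec i).2.1; omega)]
    have := (hdec i).2.1
    omega
  · -- freshness
    intro i j hji
    rw [hs, hw]
    simp only
    rw [mem_cn_nat hk hl (hbfib i) (by have := (hdec i).2.1; omega) (hbfib j)
      (by have := (hdec j).2.1; omega)]
    intro hcon
    have hi := hdec i
    have hj := hdec j
    have hdiv : j.val / (l - 2) ≤ i.val / (l - 2) :=
      Nat.div_le_div_right (le_of_lt hji)
    by_cases haa : j.val / (l - 2) = i.val / (l - 2)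
    · -- same fiber: compare positions
      have hmm : j.val % (l - 2) < i.val % (l - 2) := by
        have h1 := hi.2.2
        have h2 := hj.2.2
        rw [haa] at h2
        omega
      omega
    · have : j.val / (l - 2) < i.val / (l - 2) := lt_of_le_of_ne hdiv haa
      omega
  · -- domination
    intro v
    have hv : v = (((v.1.val : ℕ) : Fin k), ((v.2.val : ℕ) : Fin l)) := by
      apply Prod.ext <;> simp [Fin.cast_val_eq_self]
    set x := v.1.val with hx
    set y := v.2.val with hy
    have hxk : x < k := v.1.isLt
    have hyl : y < l := v.2.isLt
    have hmk : ∀ a m : ℕ, a < k / 2 → m < l - 2 → ∃ i : Fin N,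
        i.val / (l - 2) = a ∧ i.val % (l - 2) = m := by
      intro a m hak hml
      refine ⟨⟨m + (l - 2) * a, ?_⟩, ?_, ?_⟩
      · rw [hN]
        calc m + (l - 2) * a < (l - 2) + (l - 2) * a := by omega
        _ = (l - 2) * (a + 1) := by ring
        _ ≤ (l - 2) * (k / 2) := by
              apply Nat.mul_le_mul_left
              omega
        _ = k / 2 * (l - 2) := by ring
      · show (m + (l - 2) * a) / (l - 2) = a
        rw [Nat.add_mul_div_left _ _ hl2, Nat.div_eq_of_lt hml]
        omega
      · show (m + (l - 2) * a) % (l - 2) = m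
        rw [Nat.add_mul_mod_self_left, Nat.mod_eq_of_lt hml]
    by_cases hpar : x % 2 = 1
    · -- odd fiber: dominated by the even fiber below
      obtain ⟨i, hi1, hi2⟩ := hmk (x / 2) 0 (by omega) (by omega)
      refine ⟨i, ?_⟩
      rw [hv, hs]
      simp only
      rw [mem_cn_nat hk hl hxk hyl (hbfib i) (by have := (hdec i).2.1; omega)]
      rw [hi1]
      omega
    · -- even fiber: dominated inside the fiber
      have hxe : x % 2 = 0 := by omega
      have hx2 : x / 2 < k / 2 := by omega
      by_cases hy1 : y ≤ l - 3
      · obtain ⟨i, hi1, hi2⟩ := hmk (x / 2) y (by omega) (by omega)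
        refine ⟨i, ?_⟩
        rw [hv, hs]
        simp only
        rw [mem_cn_nat hk hl hxk hyl (hbfib i) (by have := (hdec i).2.1; omega)]
        rw [hi1, hi2]
        omega
      · by_cases hy2 : y = l - 2
        · obtain ⟨i, hi1, hi2⟩ := hmk (x / 2) (l - 3) (by omega) (by omega)
          refine ⟨i, ?_⟩
          rw [hv, hs]
          simp only
          rw [mem_cn_nat hk hl hxk hyl (hbfib i) (by have := (hdec i).2.1; omega)]
          rw [hi1, hi2]
          omega
        · have hy3 : y = l - 1 := by omega
          obtain ⟨i, hi1, hi2⟩ := hmk (x / 2) 0 (by omega) (by omega)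
          refine ⟨i, ?_⟩
          rw [hv, hs]
          simp only
          rw [mem_cn_nat hk hl hxk hyl (hbfib i) (by have := (hdec i).2.1; omega)]
          rw [hi1, hi2]
          omega

set_option maxHeartbeats 3200000 in
theorem lower_odd (hk : 3 < k) (hl : 3 < l) (hko : k % 2 = 1) :
    ∃ L, IsDomSeq (GG k l) L ∧ L.length = k / 2 * (l - 2) + 1 := by
  haveI : NeZero k := ⟨by omega⟩
  haveI : NeZero l := ⟨by omega⟩
  have hk5 : 5 ≤ k := by omega
  have hl2 : 0 < l - 2 := by omega
  set N := k / 2 * (l - 2) + 1 with hN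
  have hNid : N = 2 * l - 3 + (k - 5) / 2 * (l - 2) := by
    have h1 : k / 2 = (k - 5) / 2 + 2 := by omega
    have h3 : N = ((k - 5) / 2 + 2) * (l - 2) + 1 := by rw [hN, h1]
    have h2 : ((k - 5) / 2 + 2) * (l - 2) = (k - 5) / 2 * (l - 2) + 2 * (l - 2) := by ring
    omega
  set fib : ℕ → ℕ := fun t => if t < l - 2 then 0 else if t = l - 2 then 1 else
    if t ≤ 2 * l - 5 then 3 else if t = 2 * l - 4 then 2 else
    5 + 2 * ((t - (2 * l - 3)) / (l - 2)) with hfib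
  set pos : ℕ → ℕ := fun t => if t < l - 2 then t else if t = l - 2 then 0 else
    if t ≤ 2 * l - 5 then t - (l - 1) else if t = 2 * l - 4 then 0 else
    (t - (2 * l - 3)) % (l - 2) with hpos
  set wfib : ℕ → ℕ := fun t => if t = l - 2 then 2 else if t = 2 * l - 4 then 3 else fib t
    with hwfib
  set wpos : ℕ → ℕ := fun t => if t = l - 2 then 0 else if t = 2 * l - 4 then l - 2 else
    pos t + 1 with hwpos
  have hchar : ∀ t : ℕ, t < N →
      (t < l - 2 ∧ fib t = 0 ∧ pos t = t ∧ wfib t = 0 ∧ wpos t = t + 1) ∨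
      (t = l - 2 ∧ fib t = 1 ∧ pos t = 0 ∧ wfib t = 2 ∧ wpos t = 0) ∨
      (l - 2 < t ∧ t ≤ 2 * l - 5 ∧ fib t = 3 ∧ pos t = t - (l - 1) ∧ wfib t = 3 ∧
        wpos t = t - (l - 1) + 1) ∨
      (t = 2 * l - 4 ∧ fib t = 2 ∧ pos t = 0 ∧ wfib t = 3 ∧ wpos t = l - 2) ∨
      (∃ a m, 2 * l - 3 ≤ t ∧ a < (k - 5) / 2 ∧ m < l - 2 ∧
        t = 2 * l - 3 + ((l - 2) * a + m) ∧ fib t = 5 + 2 * a ∧ pos t = m ∧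
        wfib t = 5 + 2 * a ∧ wpos t = m + 1) := by
    intro t ht
    by_cases h1 : t < l - 2
    · left
      refine ⟨h1, ?_, ?_, ?_, ?_⟩
      · simp only [hfib]; rw [if_pos h1]
      · simp only [hpos]; rw [if_pos h1]
      · simp only [hwfib, hfib]; rw [if_neg (by omega), if_neg (by omega), if_pos h1]
      · simp only [hwpos, hpos]; rw [if_neg (by omega), if_neg (by omega), if_pos h1]
    · by_cases h2 : t = l - 2
      · right; left
        refine ⟨h2, ?_, ?_, ?_, ?_⟩
        · simp only [hfib]; rw [if_neg h1, if_pos h2]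
        · simp only [hpos]; rw [if_neg h1, if_pos h2]
        · simp only [hwfib]; rw [if_pos h2]
        · simp only [hwpos]; rw [if_pos h2]
      · by_cases h3 : t ≤ 2 * l - 5
        · right; right; left
          refine ⟨by omega, h3, ?_, ?_, ?_, ?_⟩
          · simp only [hfib]; rw [if_neg h1, if_neg h2, if_pos h3]
          · simp only [hpos]; rw [if_neg h1, if_neg h2, if_pos h3]
          · simp only [hwfib, hfib]
            rw [if_neg h2, if_neg (by omega), if_neg h1, if_neg h2, if_pos h3]
          · simp only [hwpos, hpos]
            rw [if_neg h2, if_neg (by omega), if_neg h1, if_neg h2, if_pos h3]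
        · by_cases h4 : t = 2 * l - 4
          · right; right; right; left
            refine ⟨h4, ?_, ?_, ?_, ?_⟩
            · simp only [hfib]; rw [if_neg h1, if_neg h2, if_neg h3, if_pos h4]
            · simp only [hpos]; rw [if_neg h1, if_neg h2, if_neg h3, if_pos h4]
            · simp only [hwfib]; rw [if_neg h2, if_pos h4]
            · simp only [hwpos]; rw [if_neg h2, if_pos h4]
          · right; right; right; right
            have h5 : 2 * l - 3 ≤ t := by omega
            set r := t - (2 * l - 3) with hr
            refine ⟨r / (l - 2), r % (l - 2), h5, ?_, Nat.mod_lt _ hl2, ?_, ?_, ?_, ?_, ?_⟩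
            · rw [Nat.div_lt_iff_lt_mul hl2]
              omega
            · have := Nat.div_add_mod r (l - 2)
              omega
            · simp only [hfib]
              rw [if_neg h1, if_neg h2, if_neg h3, if_neg h4]
            · simp only [hpos]
              rw [if_neg h1, if_neg h2, if_neg h3, if_neg h4]
            · simp only [hwfib, hfib]
              rw [if_neg h2, if_neg h4, if_neg h1, if_neg h2, if_neg h3, if_neg h4]
            · simp only [hwpos, hpos]
              rw [if_neg h2, if_neg h4, if_neg h1, if_neg h2, if_neg h3, if_neg h4]
  have hbounds : ∀ t : ℕ, t < N → fib t < k ∧ pos t < l ∧ wfib t < k ∧ wpos t < l := by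
    intro t ht
    rcases hchar t ht with h | h | h | h | ⟨a, m, h⟩ <;> omega
  have huniq : ∀ a m a' m' : ℕ, m < l - 2 → m' < l - 2 →
      (l - 2) * a + m = (l - 2) * a' + m' → a = a' ∧ m = m' := by
    intro a m a' m' hm hm' heq
    rcases lt_trichotomy a a' with h | h | h
    · exfalso
      have h1 : (l - 2) * (a + 1) ≤ (l - 2) * a' := Nat.mul_le_mul_left _ (by omega)
      have h2 : (l - 2) * (a + 1) = (l - 2) * a + (l - 2) := by ring
      omega
    · constructor
      · exact h
      · rw [h] at heq; omega
    · exfalso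
      have h1 : (l - 2) * (a' + 1) ≤ (l - 2) * a := Nat.mul_le_mul_left _ (by omega)
      have h2 : (l - 2) * (a' + 1) = (l - 2) * a' + (l - 2) := by ring
      omega
  set s : Fin N → Fin k × Fin l := fun i =>
    (((fib i.val : ℕ) : Fin k), ((pos i.val : ℕ) : Fin l)) with hs
  set w : Fin N → Fin k × Fin l := fun i =>
    (((wfib i.val : ℕ) : Fin k), ((wpos i.val : ℕ) : Fin l)) with hw
  suffices hsuff : IsDomSeq (GG k l) (List.ofFn s) ∧ (List.ofFn s).length = N by
    exact ⟨List.ofFn s, hsuff.1, by rw [hsuff.2]⟩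
  apply isDomSeq_ofFn s w
  · -- injectivity
    intro i j hij
    rw [hs] at hij
    simp only [Prod.mk.injEq] at hij
    have hbi := hbounds i.val i.isLt
    have hbj := hbounds j.val j.isLt
    have h1 := (cast_fin_inj (by omega) hbi.1 hbj.1).mp hij.1
    have h2 := (cast_fin_inj (show 0 < l by omega) hbi.2.1 hbj.2.1).mp hij.2
    apply Fin.ext
    rcases hchar i.val i.isLt with hci | hci | hci | hci | ⟨a, m, hci⟩ <;>
      rcases hchar j.val j.isLt with hcj | hcj | hcj | hcj | ⟨a', m', hcj⟩ <;>
      try omega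
    -- S5 × S5
    have haa : a = a' := by omega
    have hb : (l - 2) * a = (l - 2) * a' := by rw [haa]
    omega
  · -- footprints
    intro i
    rw [hs, hw]
    simp only
    have hbi := hbounds i.val i.isLt
    rw [mem_cn_nat hk hl hbi.2.2.1 hbi.2.2.2 hbi.1 hbi.2.1]
    rcases hchar i.val i.isLt with hci | hci | hci | hci | ⟨a, m, hci⟩ <;> omega
  · -- freshness
    intro i j hji
    rw [hs, hw]
    simp only
    have hbi := hbounds i.val i.isLt
    have hbj := hbounds j.val j.isLt
    rw [mem_cn_nat hk hl hbi.2.2.1 hbi.2.2.2 hbj.1 hbj.2.1]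
    intro hcon
    have hji' : j.val < i.val := hji
    rcases hchar i.val i.isLt with hci | hci | hci | hci | ⟨a, m, hci⟩ <;>
      rcases hchar j.val j.isLt with hcj | hcj | hcj | hcj | ⟨a', m', hcj⟩ <;>
      try omega
    -- S5 × S5
    by_cases haa : a = a'
    · have hb : (l - 2) * a = (l - 2) * a' := by rw [haa]
      omega
    · omega
  · -- domination
    intro v
    have hv : v = (((v.1.val : ℕ) : Fin k), ((v.2.val : ℕ) : Fin l)) := by
      apply Prod.ext <;> simp [Fin.cast_val_eq_self]
    set x := v.1.val with hx
    set y := v.2.val with hy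
    have hxk : x < k := v.1.isLt
    have hyl : y < l := v.2.isLt
    -- helper to produce an index with given value
    have hidx : ∀ t : ℕ, t < N → ∃ i : Fin N, i.val = t := fun t ht => ⟨⟨t, ht⟩, rfl⟩
    have hNge : 2 * l - 3 ≤ N := by
      have h2 : 2 * (l - 2) ≤ k / 2 * (l - 2) := Nat.mul_le_mul_right _ (by omega)
      omega
    have hgoal : ∀ i : Fin N, (((x : ℕ) : Fin k), ((y : ℕ) : Fin l)) ∈
        closedNbhd (GG k l) (s i) ↔
        ((fib i.val + 1 = x ∨ (fib i.val + 1 = k ∧ x = 0)) ∨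
          (x + 1 = fib i.val ∨ (x + 1 = k ∧ fib i.val = 0)) ∨
          (x = fib i.val ∧ (y = pos i.val ∨
            (pos i.val + 1 = y ∨ (pos i.val + 1 = l ∧ y = 0)) ∨
            (y + 1 = pos i.val ∨ (y + 1 = l ∧ pos i.val = 0))))) := by
      intro i
      have hbi := hbounds i.val i.isLt
      rw [hs]
      simp only
      rw [mem_cn_nat hk hl hxk hyl hbi.1 hbi.2.1]
    rw [hv]
    -- case on the fiber x
    by_cases hx0 : x = 0
    · -- dominated by (1,0), segment S2
      obtain ⟨i, hi⟩ := hidx (l - 2) (by omega)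
      refine ⟨i, ?_⟩
      rw [hgoal i, hi]
      rcases hchar (l - 2) (by omega) with h | h | h | h | ⟨a, m, h⟩ <;> omega
    · by_cases hx1 : x = 1
      · obtain ⟨i, hi⟩ := hidx 0 (by omega)
        refine ⟨i, ?_⟩
        rw [hgoal i, hi]
        rcases hchar 0 (by omega) with h | h | h | h | ⟨a, m, h⟩ <;> omega
      · by_cases hx2 : x = 2
        · obtain ⟨i, hi⟩ := hidx (l - 1) (by omega)
          refine ⟨i, ?_⟩
          rw [hgoal i, hi]
          rcases hchar (l - 1) (by omega) with h | h | h | h | ⟨a, m, h⟩ <;> omega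
        · by_cases hx3 : x = 3
          · obtain ⟨i, hi⟩ := hidx (2 * l - 4) (by omega)
            refine ⟨i, ?_⟩
            rw [hgoal i, hi]
            rcases hchar (2 * l - 4) (by omega) with h | h | h | h | ⟨a, m, h⟩ <;> omega
          · by_cases hx4 : x = 4
            · obtain ⟨i, hi⟩ := hidx (l - 1) (by omega)
              refine ⟨i, ?_⟩
              rw [hgoal i, hi]
              rcases hchar (l - 1) (by omega) with h | h | h | h | ⟨a, m, h⟩ <;> omega
            · by_cases hxk1 : x = k - 1
              · obtain ⟨i, hi⟩ := hidx 0 (by omega)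
                refine ⟨i, ?_⟩
                rw [hgoal i, hi]
                rcases hchar 0 (by omega) with h | h | h | h | ⟨a, m, h⟩ <;> omega
              · -- now 5 ≤ x ≤ k - 2
                have hx5 : 5 ≤ x ∧ x ≤ k - 2 := by omega
                -- S5 index helper
                have hS5 : ∀ a m : ℕ, a < (k - 5) / 2 → m < l - 2 →
                    ∃ i : Fin N, fib i.val = 5 + 2 * a ∧ pos i.val = m := by
                  intro a m ha hm
                  have hbound : 2 * l - 3 + ((l - 2) * a + m) < N := by
                    have h1 : (l - 2) * (a + 1) ≤ (l - 2) * ((k - 5) / 2) :=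
                      Nat.mul_le_mul_left _ (by omega)
                    have h2 : (l - 2) * (a + 1) = (l - 2) * a + (l - 2) := by ring
                    have h3 : (l - 2) * ((k - 5) / 2) = (k - 5) / 2 * (l - 2) := by ring
                    omega
                  obtain ⟨i, hi⟩ := hidx (2 * l - 3 + ((l - 2) * a + m)) hbound
                  refine ⟨i, ?_, ?_⟩ <;>
                  · rcases hchar i.val i.isLt with h | h | h | h | ⟨a', m', h⟩
                    · omega
                    · omega
                    · omega
                    · omega
                    · obtain ⟨heqa, heqm⟩ := huniq a' m' a m (by omega) (by omega) (by omega)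
                      omega
                by_cases hpar : x % 2 = 1
                · -- odd fiber in S5 range: self-dominated
                  set a := (x - 5) / 2 with ha
                  have hxa : x = 5 + 2 * a := by omega
                  have hak : a < (k - 5) / 2 := by omega
                  by_cases hy1 : y ≤ l - 3
                  · obtain ⟨i, hf, hp⟩ := hS5 a y hak (by omega)
                    exact ⟨i, by rw [hgoal i]; omega⟩
                  · by_cases hy2 : y = l - 2
                    · obtain ⟨i, hf, hp⟩ := hS5 a (l - 3) hak (by omega)
                      exact ⟨i, by rw [hgoal i]; omega⟩
                    · obtain ⟨i, hf, hp⟩ := hS5 a 0 hak (by omega)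
                      exact ⟨i, by rw [hgoal i]; omega⟩
                · -- even fiber in [6, k-3]: dominated by odd fiber below
                  set a := (x - 6) / 2 with ha
                  have hxa : x = 6 + 2 * a := by omega
                  have hak : a < (k - 5) / 2 := by omega
                  obtain ⟨i, hf, hp⟩ := hS5 a 0 hak (by omega)
                  exact ⟨i, by rw [hgoal i]; omega⟩

theorem grundy_eq (hk : 3 < k) (hl : 3 < l) :
    grundyDomNum (GG k l) = k / 2 * (l - 2) + k % 2 := by
  have hup : ∀ m ∈ {n | ∃ L : List (Fin k × Fin l), IsDomSeq (GG k l) L ∧ L.length = n},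
      m ≤ k / 2 * (l - 2) + k % 2 := by
    rintro m ⟨L, hL, rfl⟩
    exact upper_bound hk hl L hL.1
  have hmem : (k / 2 * (l - 2) + k % 2) ∈
      {n | ∃ L : List (Fin k × Fin l), IsDomSeq (GG k l) L ∧ L.length = n} := by
    rcases Nat.even_or_odd k with hke | hko
    · have hke' : k % 2 = 0 := Nat.even_iff.mp hke
      rw [hke']
      obtain ⟨L, hL, hlen⟩ := lower_even hk hl hke'
      exact ⟨L, hL, by simpa using hlen⟩
    · have hko' : k % 2 = 1 := Nat.odd_iff.mp hko
      rw [hko']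
      exact lower_odd hk hl hko'
  exact IsGreatest.csSup_eq ⟨hmem, hup⟩

end Stmt12

theorem stmt_12 (k l : ℕ) (hk : 3 < k) (hl : 3 < l) :
    (k % 2 = 0 →
      grundyDomNum (lexProd (cycleGraph k) (cycleGraph l)) = (k / 2) * (l - 2)) ∧
    (k % 2 = 1 →
      grundyDomNum (lexProd (cycleGraph k) (cycleGraph l)) = (k / 2) * (l - 2) + 1) := by
  have h := Stmt12.grundy_eq hk hl
  constructor <;> intro hp <;> rw [hp] at h <;> simpa using h
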